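/- arXiv:math/0606379 — 3 statements merged into one kernel-verified Lean document; each statement's English description precedes it below -/
import Mathlib

section
/- Let G be a group and a, b ∈ G satisfy the braid relation a*b*a = b*a*b. Then for every integer n, the element (b*a*b)⁻¹*a^n is conjugate in G to b⁻¹*a^(n-2). -/
theorem stmt_3 {G : Type*} [Group G] (a b : G) (h : a * b * a = b * a * b) (n : ℤ) :
    IsConj ((b * a * b)⁻¹ * a ^ n) (b⁻¹ * a ^ (n - 2)) := by
  refine ⟨⟨a, a⁻¹, mul_inv_cancel a, inv_mul_cancel a⟩, ?_⟩
  show a * ((b * a * b)⁻¹ * a ^ n) = b⁻¹ * a ^ (n - 2) * a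
  rw [← h]
  group
end

section
/- Let k, n, p, q be integers with n odd, k = 5, 3k + n = p + q + 1, and |n + 2| = |2pq + p + q|. Then pq = -6 and p + q is odd, so n ∈ {-13, -15, -19, -9}. -/
theorem stmt_17 (k n p q : ℤ) (hn : Odd n) (hk : k = 5)
    (h1 : 3 * k + n = p + q + 1) (h2 : |n + 2| = |2 * p * q + p + q|) :
    p * q = -6 ∧ Odd (p + q) ∧ n ∈ ({-13, -15, -19, -9} : Set ℤ) := by
  subst hk
  obtain ⟨m, hm⟩ := hn
  have hsum : Odd (p + q) := ⟨m + 7, by omega⟩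
  have hpq : p * q = -6 := by
    rcases abs_eq_abs.mp h2 with h | h
    · linarith
    · exfalso
      have he : Even (p * q) := by
        rcases Int.even_or_odd p with hp | hp
        · exact hp.mul_right q
        · rcases Int.even_or_odd q with hq | hq
          · exact hq.mul_left p
          · exact absurd (hp.add_odd hq) (Int.not_even_iff_odd.mpr hsum)
      obtain ⟨t, ht⟩ := he
      obtain ⟨s, hs⟩ := hsum
      have : (t + t) + (2 * s + 1) = 6 := by linarith
      omega
  refine ⟨hpq, hsum, ?_⟩
  have h6 : p ∣ 6 := ⟨-q, by linarith⟩
  have hle : p ≤ 6 := Int.le_of_dvd (by norm_num) h6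
  have hge' : -p ≤ 6 := Int.le_of_dvd (by norm_num) ((neg_dvd).mpr h6)
  have hge : (-6:ℤ) ≤ p := by linarith
  simp only [Set.mem_insert_iff, Set.mem_singleton_iff]
  interval_cases p <;> omega
end

section
/- Let k, n, p, q be integers with n odd, k = -3, 3k + n = p + q + 1, and |n + 2| = |2pq + p + q|. Then pq = 6 and p + q is odd, so n ∈ {15, 5, 17, 3}. -/
theorem stmt_18 (k n p q : ℤ) (hn : Odd n) (hk : k = -3)
    (h1 : 3 * k + n = p + q + 1) (h2 : |n + 2| = |2 * p * q + p + q|) :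
    p * q = 6 ∧ Odd (p + q) ∧ n ∈ ({15, 5, 17, 3} : Set ℤ) := by
  subst hk
  have hnval : n = p + q + 10 := by linarith
  have hodd : Odd (p + q) := by
    rcases hn with ⟨m, hm⟩
    exact ⟨m - 5, by omega⟩
  have hpq : p * q = 6 := by
    rcases abs_eq_abs.mp h2 with h | h
    · linarith
    · exfalso
      have h5 : (p + 1) * (q + 1) = -5 := by nlinarith
      have hodd5 : Odd ((p + 1) * (q + 1)) := h5 ▸ ⟨-3, by ring⟩
      rw [Int.odd_mul] at hodd5
      obtain ⟨⟨a, ha⟩, ⟨b, hb⟩⟩ := hodd5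
      rcases hodd with ⟨c, hc⟩
      omega
  refine ⟨hpq, hodd, ?_⟩
  have hd : p ∣ 6 := ⟨q, hpq.symm⟩
  have hb : |p| ≤ 6 := by
    have := Int.le_of_dvd (by norm_num) ((abs_dvd p 6).mpr hd)
    omega
  obtain ⟨hb1, hb2⟩ := abs_le.mp hb
  rcases hodd with ⟨c, hc⟩
  simp only [Set.mem_insert_iff, Set.mem_singleton_iff]
  interval_cases p <;> omega
end
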